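/- Let (M,g,∇f) be a steady gradient Ricci soliton region on which R_g + |∇f|²_g = c(g) > 0, where R_g → 0 at infinity. Fix β ∈ (0,1) and α ∈ ℝ, and set φ₀ = e^{-βf}. Then Δφ₀ + g(∇(f - α log f), ∇φ₀) = -β( (β + α/f) R_g + (1 - β - α/f) c(g) ) φ₀, and in particular Δ_{f - α log f} φ₀ ≤ -(β(1-β)c(g)/2) φ₀ outside a compact set. -/

import Mathlib

open MeasureTheory RealInnerProductSpace Filter

/-- The Euclidean Laplacian (trace of the Hessian with respect to the flat metric). -/
noncomputable def lapE {d : ℕ} (f : EuclideanSpace ℝ (Fin d) → ℝ)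
    (x : EuclideanSpace ℝ (Fin d)) : ℝ :=
  ∑ i : Fin d,
    fderiv ℝ (fun y => fderiv ℝ f y (EuclideanSpace.single i 1)) x (EuclideanSpace.single i 1)

/-- Barrier computation on a steady gradient Ricci soliton region (formalised in a flat
chart): if `R + |∇f|² = c > 0` with `Δf = R` (the soliton identities), `R → 0` at infinity,
`f` positive and proper, `β ∈ (0,1)`, `α ∈ ℝ`, and `φ₀ = e^{-βf}`, then
`Δφ₀ + ⟨∇(f - α log f), ∇φ₀⟩ = -β((β + α/f) R + (1 - β - α/f) c) φ₀`, and in particular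
`Δ_{f - α log f} φ₀ ≤ -(β(1-β)c/2) φ₀` outside a compact set. -/
theorem statement12 {d : ℕ} (f R : EuclideanSpace ℝ (Fin d) → ℝ)
    (hf : ContDiff ℝ 2 f) (hfpos : ∀ x, 0 < f x)
    (hproper : Tendsto f (cocompact (EuclideanSpace ℝ (Fin d))) atTop)
    (c : ℝ) (hc : 0 < c)
    (hΔf : ∀ x, lapE f x = R x)
    (hcharge : ∀ x, ‖gradient f x‖ ^ 2 = c - R x)
    (hR0 : Tendsto R (cocompact (EuclideanSpace ℝ (Fin d))) (nhds 0))
    (β α : ℝ) (hβ : β ∈ Set.Ioo (0 : ℝ) 1) :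
    (∀ x, lapE (fun y => Real.exp (-β * f y)) x +
        ⟪gradient (fun y => f y - α * Real.log (f y)) x,
          gradient (fun y => Real.exp (-β * f y)) x⟫ =
        -β * ((β + α / f x) * R x + (1 - β - α / f x) * c) * Real.exp (-β * f x)) ∧
    ∃ K : Set (EuclideanSpace ℝ (Fin d)), IsCompact K ∧ ∀ x ∉ K,
      lapE (fun y => Real.exp (-β * f y)) x +
          ⟪gradient (fun y => f y - α * Real.log (f y)) x,
            gradient (fun y => Real.exp (-β * f y)) x⟫ ≤
        -(β * (1 - β) * c / 2) * Real.exp (-β * f x) := by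
  obtain ⟨hβ0, hβ1⟩ := hβ
  have hfd : ∀ y, DifferentiableAt ℝ f y :=
    fun y => (hf.differentiable (by norm_num)).differentiableAt
  -- fderiv of f in terms of the gradient
  have hgradf : ∀ x v, fderiv ℝ f x v = ⟪gradient f x, v⟫ := fun x v => by
    rw [(hfd x).hasGradientAt.hasFDerivAt.fderiv, InnerProductSpace.toDual_apply_apply]
  -- a gradient-scaling principle
  have key : ∀ (u : EuclideanSpace ℝ (Fin d) → ℝ) (s : ℝ) (x),
      HasFDerivAt u (s • fderiv ℝ f x) x → gradient u x = s • gradient f x := by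
    intro u s x h
    have : HasGradientAt u (s • gradient f x) x := by
      rw [hasGradientAt_iff_hasFDerivAt, _root_.map_smul,
        ← (hfd x).hasGradientAt.hasFDerivAt.fderiv]
      exact h
    exact this.gradient
  -- fderiv of E = exp(-β f)
  have hDE : ∀ y, DifferentiableAt ℝ (fun z => Real.exp (-β * f z)) y :=
    fun y => ((hfd y).const_mul (-β)).exp
  have hfE : ∀ x, fderiv ℝ (fun z => Real.exp (-β * f z)) x
      = (-β * Real.exp (-β * f x)) • fderiv ℝ f x := by
    intro x
    rw [fderiv_exp ((hfd x).const_mul (-β)), fderiv_const_mul (hfd x) (-β), smul_smul,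
      mul_comm]
  have hgE : ∀ x, gradient (fun z => Real.exp (-β * f z)) x
      = (-β * Real.exp (-β * f x)) • gradient f x := by
    intro x
    exact key _ _ x (by rw [← hfE x]; exact (hDE x).hasFDerivAt)
  -- gradient of w = f - α log f
  have hfne : ∀ x, f x ≠ 0 := fun x => (hfpos x).ne'
  have hDlog : ∀ y, DifferentiableAt ℝ (fun z => α * Real.log (f z)) y :=
    fun y => ((hfd y).log (hfne y)).const_mul α
  have hfw : ∀ x, fderiv ℝ (fun z => f z - α * Real.log (f z)) x
      = (1 - α / f x) • fderiv ℝ f x := by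
    intro x
    rw [fderiv_fun_sub (hfd x) (hDlog x), fderiv_const_mul ((hfd x).log (hfne x)) α,
      fderiv.log (hfd x) (hfne x), smul_smul, sub_smul, one_smul, div_eq_mul_inv]
  have hgw : ∀ x, gradient (fun z => f z - α * Real.log (f z)) x
      = (1 - α / f x) • gradient f x := by
    intro x
    exact key _ _ x (by rw [← hfw x]; exact ((hfd x).sub (hDlog x)).hasFDerivAt)
  -- second derivatives of E
  have hfC1 : ContDiff ℝ 1 (fderiv ℝ f) := hf.fderiv_right (by norm_num)
  have hFdiff : ∀ v, Differentiable ℝ (fun y => fderiv ℝ f y v) :=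
    fun v => (hfC1.clm_apply contDiff_const).differentiable one_ne_zero
  have hE' : ∀ (y) (v), fderiv ℝ (fun z => Real.exp (-β * f z)) y v
      = (-β * Real.exp (-β * f y)) * fderiv ℝ f y v := by
    intro y v; rw [hfE y]; simp [smul_eq_mul]
  have hlapE : ∀ x, lapE (fun z => Real.exp (-β * f z)) x
      = Real.exp (-β * f x) * (β ^ 2 * ‖gradient f x‖ ^ 2) -
        β * Real.exp (-β * f x) * R x := by
    intro x
    have hterm : ∀ i : Fin d,
        fderiv ℝ (fun y => fderiv ℝ (fun z => Real.exp (-β * f z)) y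
            (EuclideanSpace.single i 1)) x (EuclideanSpace.single i 1)
        = (-β * Real.exp (-β * f x)) *
            fderiv ℝ (fun y => fderiv ℝ f y (EuclideanSpace.single i 1)) x
              (EuclideanSpace.single i 1)
          + (fderiv ℝ f x (EuclideanSpace.single i 1)) *
            ((β ^ 2 * Real.exp (-β * f x)) * fderiv ℝ f x (EuclideanSpace.single i 1)) := by
      intro i
      have hfun : (fun y => fderiv ℝ (fun z => Real.exp (-β * f z)) y
          (EuclideanSpace.single i 1))
          = fun y => (-β * Real.exp (-β * f y)) * fderiv ℝ f y (EuclideanSpace.single i 1) :=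
        funext fun y => hE' y _
      rw [hfun]
      have hda : DifferentiableAt ℝ (fun y => -β * Real.exp (-β * f y)) x :=
        (hDE x).const_mul (-β)
      have hdb : DifferentiableAt ℝ (fun y => fderiv ℝ f y (EuclideanSpace.single i 1)) x :=
        (hFdiff _ x)
      rw [fderiv_fun_mul hda hdb]
      have ha : fderiv ℝ (fun y => -β * Real.exp (-β * f y)) x (EuclideanSpace.single i 1)
          = (β ^ 2 * Real.exp (-β * f x)) * fderiv ℝ f x (EuclideanSpace.single i 1) := by
        rw [fderiv_const_mul (hDE x) (-β)]
        simp only [ContinuousLinearMap.coe_smul', Pi.smul_apply, smul_eq_mul]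
        rw [hE' x]
        ring
      simp only [ContinuousLinearMap.add_apply, ContinuousLinearMap.coe_smul',
        Pi.smul_apply, smul_eq_mul, ha]
      try ring
    have hsum : ∑ i : Fin d, (fderiv ℝ f x (EuclideanSpace.single i 1)) ^ 2
        = ‖gradient f x‖ ^ 2 := by
      rw [← real_inner_self_eq_norm_sq]
      rw [PiLp.inner_apply]
      refine Finset.sum_congr rfl fun i _ => ?_
      rw [hgradf x, EuclideanSpace.inner_single_right]
      simp [sq, mul_comm]
    unfold lapE
    simp only [hterm]
    rw [Finset.sum_add_distrib, ← Finset.mul_sum]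
    have : ∑ i : Fin d, fderiv ℝ f x (EuclideanSpace.single i 1) *
        (β ^ 2 * Real.exp (-β * f x) * fderiv ℝ f x (EuclideanSpace.single i 1))
        = β ^ 2 * Real.exp (-β * f x) *
          ∑ i : Fin d, (fderiv ℝ f x (EuclideanSpace.single i 1)) ^ 2 := by
      rw [Finset.mul_sum]; refine Finset.sum_congr rfl fun i _ => by ring
    rw [this, hsum]
    have hlf : ∑ i : Fin d, fderiv ℝ (fun y => fderiv ℝ f y (EuclideanSpace.single i 1)) x
        (EuclideanSpace.single i 1) = R x := hΔf x
    rw [hlf]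
    ring
  -- the main identity
  have hmain : ∀ x, lapE (fun y => Real.exp (-β * f y)) x +
      ⟪gradient (fun y => f y - α * Real.log (f y)) x,
        gradient (fun y => Real.exp (-β * f y)) x⟫ =
      -β * ((β + α / f x) * R x + (1 - β - α / f x) * c) * Real.exp (-β * f x) := by
    intro x
    have hinner : ⟪gradient (fun y => f y - α * Real.log (f y)) x,
        gradient (fun y => Real.exp (-β * f y)) x⟫
        = (1 - α / f x) * (-β * Real.exp (-β * f x)) * ‖gradient f x‖ ^ 2 := by
      rw [hgw x, hgE x, real_inner_smul_left, real_inner_smul_right,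
        real_inner_self_eq_norm_sq]
      ring
    rw [hlapE x, hinner, hcharge x]
    field_simp
    ring
  refine ⟨hmain, ?_⟩
  -- part 2
  set N : ℝ := 1 + 4 * |α| / (1 - β) with hN
  set ε : ℝ := (1 - β) * c / (4 * (1 + |α|)) with hε
  have h1β : 0 < 1 - β := by linarith
  have hαpos : 0 < 1 + |α| := by positivity
  have hεpos : 0 < ε := by positivity
  have he1 : ∀ᶠ x in cocompact (EuclideanSpace ℝ (Fin d)), N ≤ f x :=
    hproper.eventually_ge_atTop N
  have he2 : ∀ᶠ x in cocompact (EuclideanSpace ℝ (Fin d)), |R x| < ε := by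
    have := Metric.tendsto_nhds.mp hR0 ε hεpos
    filter_upwards [this] with x hx
    rwa [Real.dist_eq, sub_zero] at hx
  obtain ⟨K, hK, hKs⟩ := mem_cocompact.mp (he1.and he2)
  refine ⟨K, hK, fun x hx => ?_⟩
  obtain ⟨hNx, hRx⟩ := hKs hx
  rw [hmain x]
  -- scalar estimates
  have hNpos : (1 : ℝ) ≤ N := by
    rw [hN]; have : 0 ≤ 4 * |α| / (1 - β) := by positivity
    linarith
  have hfx : (1 : ℝ) ≤ f x := le_trans hNpos hNx
  have hfxpos : 0 < f x := hfpos x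
  have haN : |α / f x| ≤ (1 - β) / 4 := by
    rw [abs_div, abs_of_pos hfxpos, div_le_iff₀ hfxpos]
    have h4 : 4 * |α| / (1 - β) ≤ f x := le_trans (by rw [hN]; linarith) hNx
    have := (div_le_iff₀ h1β).mp h4
    nlinarith
  have haα : |α / f x| ≤ |α| := by
    rw [abs_div, abs_of_pos hfxpos]
    exact div_le_self (abs_nonneg α) hfx
  set a : ℝ := α / f x
  set r : ℝ := R x
  have hεeq : (1 + |α|) * ε = (1 - β) * c / 4 := by
    rw [hε]; field_simp
  have hprod : |(β + a) * r| ≤ (1 - β) * c / 4 := by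
    rw [abs_mul]
    calc |β + a| * |r| ≤ (1 + |α|) * ε := by
          apply mul_le_mul _ hRx.le (abs_nonneg r) (by positivity)
          calc |β + a| ≤ |β| + |a| := abs_add_le _ _
            _ ≤ 1 + |α| := by
                rw [abs_of_pos hβ0]; exact add_le_add hβ1.le haα
      _ = (1 - β) * c / 4 := hεeq
  have hac : |a| * c ≤ (1 - β) * c / 4 := by
    have := mul_le_mul_of_nonneg_right haN hc.le
    calc |a| * c ≤ (1 - β) / 4 * c := this
      _ = (1 - β) * c / 4 := by ring
  have hS : (1 - β) * c / 2 ≤ (β + a) * r + (1 - β - a) * c := by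
    have h1 : -((1 - β) * c / 4) ≤ (β + a) * r := neg_le_of_abs_le hprod
    have h2 : a * c ≤ (1 - β) * c / 4 :=
      le_trans (le_trans (le_abs_self _) (by rw [abs_mul, abs_of_pos hc])) hac
    nlinarith
  have hexp := Real.exp_pos (-β * f x)
  nlinarith [mul_nonneg (mul_nonneg hβ0.le (sub_nonneg.mpr hS)) hexp.le]
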